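/- For all natural numbers m, n one has H(m+2, n) · (Z(1,2) ⊗ I_{2^m}) = H(m+1, n); that is, feeding both copies of a copied wire into two legs of an H-box is the same as connecting it by a single wire (the derived deduplication rule (DC) of the phase-free ZH-calculus, Lemma 3.4 and Appendix D). -/

import Mathlib

/-- An `(m,n)`-qubit map: a complex matrix with rows indexed by output
bit strings of length `n` and columns indexed by input bit strings of length `m`. -/
abbrev QMap (m n : ℕ) : Type := Matrix (Fin n → Bool) (Fin m → Bool) ℂ

/-- Canonical identification of a pair of bit strings with a single bit string. -/
def bitEquiv (a b : ℕ) : ((Fin a → Bool) × (Fin b → Bool)) ≃ (Fin (a + b) → Bool) :=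
  (Equiv.sumArrowEquivProdArrow (Fin a) (Fin b) Bool).symm.trans
    (Equiv.arrowCongr finSumFinEquiv (Equiv.refl Bool))

/-- Kronecker (tensor) product of qubit maps, under the canonical identification. -/
def tens {m n m' n' : ℕ} (A : QMap m n) (B : QMap m' n') : QMap (m + m') (n + n') :=
  Matrix.reindex (bitEquiv n n') (bitEquiv m m') (Matrix.kroneckerMap (· * ·) A B)

/-- Transport a qubit map along equalities of the numbers of inputs and outputs. -/
def castQ {m m' n n' : ℕ} (hm : m = m') (hn : n = n') (A : QMap m n) : QMap m' n' :=
  Matrix.reindex (Equiv.arrowCongr (finCongr hn) (Equiv.refl Bool))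
    (Equiv.arrowCongr (finCongr hm) (Equiv.refl Bool)) A

/-- The Z-spider `Z(m,n)`: entry 1 iff all `m+n` bits are equal (all 0 or all 1). -/
def Zsp (m n : ℕ) : QMap m n := fun j i =>
  if ((∀ k, i k = false) ∧ (∀ k, j k = false)) ∨ ((∀ k, i k = true) ∧ (∀ k, j k = true))
  then 1 else 0

/-- The X-spider `X(m,n)`: entry 1 iff the sum mod 2 of all `m+n` bits is 0. -/
def Xsp (m n : ℕ) : QMap m n := fun j i =>
  if ((∑ k, (if i k then (1 : ZMod 2) else 0)) + ∑ k, (if j k then (1 : ZMod 2) else 0)) = 0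
  then 1 else 0

/-- The (phase-free) H-box `H(m,n)`: entry −1 iff all `m+n` bits are 1, else 1. -/
def Hbox (m n : ℕ) : QMap m n := fun j i =>
  if (∀ k, i k = true) ∧ (∀ k, j k = true) then -1 else 1

/-- The Hadamard gate `(1/√2)·[[1,1],[1,−1]]`. -/
noncomputable def Had : QMap 1 1 := fun j i =>
  (Real.sqrt 2 : ℂ)⁻¹ * (if i 0 = true ∧ j 0 = true then -1 else 1)

/-- The NOT gate `[[0,1],[1,0]]`. -/
def Xg : QMap 1 1 := fun j i => if j 0 = i 0 then 0 else 1

/-- The Z gate `diag(1,−1)`. -/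
def Zg : QMap 1 1 := fun j i => if j 0 = i 0 then (if i 0 = true then -1 else 1) else 0

/-- The triangle `[[1,1],[0,1]]` (row `j`, column `i`; the only zero entry is at `j=1, i=0`). -/
def Tri : QMap 1 1 := fun j i => if j 0 = true ∧ i 0 = false then 0 else 1

/-- The AND gate: `|x,y⟩ ↦ |x ∧ y⟩`. -/
def ANDg : QMap 2 1 := fun j i => if j 0 = (i 0 && i 1) then 1 else 0

/-- The swap of two qubits. -/
def swapQ : QMap 2 2 := fun j i => if j 0 = i 1 ∧ j 1 = i 0 then 1 else 0

/-- The cup `|00⟩ + |11⟩`. -/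
def cupQ : QMap 0 2 := fun j _ => if j 0 = j 1 then 1 else 0

/-- The cap `⟨00| + ⟨11|`. -/
def capQ : QMap 2 0 := fun _ i => if i 0 = i 1 then 1 else 0

/-- The scalar `1/√2` as a `(0,0)`-map. -/
noncomputable def starQ : QMap 0 0 := fun _ _ => (Real.sqrt 2 : ℂ)⁻¹

/-- `k`-fold tensor power of a qubit map. -/
def tpow {a b : ℕ} (A : QMap a b) : (k : ℕ) → QMap (a * k) (b * k)
  | 0 => (1 : QMap 0 0)
  | k + 1 => tens (tpow A k) A

/-- The wire in block `s` (of `b` blocks), at position `t` within the block (of size `a`). -/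
def wp {a b : ℕ} (s : Fin b) (t : Fin a) : Fin (a * b) :=
  ⟨a * s.val + t.val, by
    have ht := t.isLt
    have hs := s.isLt
    have h1 : a * s.val + t.val < a * (s.val + 1) := by rw [Nat.mul_succ]; omega
    exact lt_of_lt_of_le h1 (Nat.mul_le_mul (le_refl a) hs)⟩

/-- The permutation `σ_{m,n}` regrouping `m` blocks of `n` wires into `n` blocks of `m` wires:
it reindexes bit strings `g : Fin m × Fin n → Bool` to `(s,t) ↦ g(t,s)`. -/
def sigmaQ (m n : ℕ) : QMap (n * m) (m * n) := fun j i =>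
  if ∀ (s : Fin m) (t : Fin n), j (wp t s) = i (wp s t) then 1 else 0

def ext' (m : ℕ) (i : Fin (m+1) → Bool) : Fin (m+2) → Bool :=
  fun t => if h : t.val ≤ 1 then i 0 else i ⟨t.val - 1, by omega⟩

lemma key (m : ℕ) (k : Fin (m+2) → Bool) (i : Fin (m+1) → Bool) :
    ((i ⟨0, by omega⟩ = false ∧ k ⟨0, by omega⟩ = false ∧ k ⟨1, by omega⟩ = false) ∨
      (i ⟨0, by omega⟩ = true ∧ k ⟨0, by omega⟩ = true ∧ k ⟨1, by omega⟩ = true)) ∧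
      (∀ x : Fin m, k ⟨2 + x.val, by omega⟩ = i ⟨1 + x.val, by omega⟩) ↔
    (∀ x : Fin (m+2), k x = ext' m i x) := by
  have e0 : (0 : Fin (m+1)) = ⟨0, by omega⟩ := by ext; simp
  constructor
  · rintro ⟨h1, h2⟩ ⟨v, hv⟩
    simp only [ext']
    by_cases hv1 : v ≤ 1
    · rw [dif_pos hv1, e0]
      interval_cases v
      · rcases h1 with ⟨ha, hb, _⟩ | ⟨ha, hb, _⟩ <;> rw [hb, ha]
      · rcases h1 with ⟨ha, _, hc⟩ | ⟨ha, _, hc⟩ <;> rw [hc, ha]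
    · rw [dif_neg hv1]
      have := h2 ⟨v - 2, by omega⟩
      have ee : (⟨2 + (v - 2), by omega⟩ : Fin (m+2)) = ⟨v, hv⟩ := by simp only [Fin.mk.injEq]; omega
      have ee2 : (⟨1 + (v - 2), by omega⟩ : Fin (m+1)) = ⟨v - 1, by omega⟩ := by
        simp only [Fin.mk.injEq]; omega
      rw [ee, ee2] at this
      exact this
  · intro h
    have h0 := h ⟨0, by omega⟩
    have h1 := h ⟨1, by omega⟩
    simp only [ext'] at h0 h1
    rw [dif_pos (by omega)] at h0
    rw [dif_pos (by omega)] at h1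
    constructor
    · rw [e0] at h0 h1
      cases hc : i (⟨0, by omega⟩ : Fin (m+1))
      · left; exact ⟨rfl, by rw [h0, hc], by rw [h1, hc]⟩
      · right; exact ⟨rfl, by rw [h0, hc], by rw [h1, hc]⟩
    · intro x
      have := h ⟨2 + x.val, by omega⟩
      simp only [ext'] at this
      rw [dif_neg (by omega)] at this
      have ee : (⟨2 + x.val - 1, by omega⟩ : Fin (m+1)) = ⟨1 + x.val, by omega⟩ := by
        simp only [Fin.mk.injEq]; omega
      rw [ee] at this
      exact this

lemma B_apply (m : ℕ) (k : Fin (m+2) → Bool) (i : Fin (m+1) → Bool) :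
    castQ (Nat.add_comm 1 m) (Nat.add_comm 2 m)
        (tens (Zsp 1 2) (1 : QMap m m)) k i = if k = ext' m i then 1 else 0 := by
  simp only [castQ, tens, Matrix.reindex_apply, Matrix.submatrix_apply,
    Matrix.kroneckerMap_apply, bitEquiv, Zsp, Matrix.one_apply, Equiv.symm_trans_apply,
    Equiv.arrowCongr_symm, Equiv.arrowCongr_apply, Equiv.symm_symm,
    Equiv.sumArrowEquivProdArrow, Equiv.coe_fn_mk, Equiv.coe_fn_symm_mk,
    Equiv.refl_symm, Equiv.coe_refl, Function.comp, finSumFinEquiv_apply_left,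
    finSumFinEquiv_apply_right, finCongr_apply, Fin.forall_fin_one, Fin.forall_fin_two,
    id, Fin.cast, Fin.coe_castAdd, Fin.coe_natAdd, Fin.isValue, funext_iff,
    Function.comp_apply, Equiv.refl_apply]
  rw [ite_zero_mul_ite_zero, mul_one]
  exact if_congr (key m k i) rfl rfl

/-- feeding both copies of a copied wire into two legs of an H-box
is the same as connecting it by a single wire (deduplication rule (DC)). -/
theorem zh_dedup (m n : ℕ) :
    Hbox (m + 2) n *
      castQ (by omega : 1 + m = m + 1) (by omega : 2 + m = m + 2)
        (tens (Zsp 1 2) (1 : QMap m m)) =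
    Hbox (m + 1) n := by
  funext j i
  rw [Matrix.mul_apply]
  simp only [B_apply, mul_ite, mul_one, mul_zero]
  rw [Finset.sum_ite_eq' Finset.univ (ext' m i) (fun k => Hbox (m+2) n j k)]
  simp only [Finset.mem_univ, if_true]
  simp only [Hbox]
  refine if_congr (and_congr ?_ Iff.rfl) rfl rfl
  constructor
  · intro h t
    by_cases ht : t.val = 0
    · have := h ⟨0, by omega⟩
      simp only [ext', dif_pos (by omega : (0:ℕ) ≤ 1)] at this
      rw [show t = 0 from by ext; simpa using ht]
      exact this
    · have := h ⟨t.val + 1, by omega⟩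
      simp only [ext'] at this
      rw [dif_neg (by omega)] at this
      have ee : (⟨t.val + 1 - 1, by omega⟩ : Fin (m+1)) = t := by ext; simp
      rwa [ee] at this
  · intro h t
    simp only [ext']
    split
    · exact h 0
    · exact h _
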